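/- Let S be a nonempty finite index set of cardinality n, and for each i in S let Y_it, Y_ic be real numbers and p_i ∈ (0,1). Define μ_t, μ_c, p_t, p_c, s_t, s_c, ρ_t, ρ_c as usual: μ_t = (1/n)·Σ Y_it, μ_c = (1/n)·Σ Y_ic, p_t = (1/n)·Σ p_i, p_c = 1 − p_t, s_t = (1/n)·Σ Y_it·p_i − μ_t·p_t, s_c = (1/n)·Σ Y_ic·(1 − p_i) − μ_c·p_c, ρ_t = μ_t + s_t/p_t, ρ_c = μ_c + s_c/p_c. Define the delta-method mean E_δ(τ̂) := (ρ_t − Cov(y_t − ρ_t·x_t, x_t)/(n·p_t)²) − (ρ_c − Cov(y_c − ρ_c·x_c, x_c)/(n·p_c)²), where x_t = Σ W_i, y_t = Σ W_i·Y_it, x_c = Σ (1 − W_i), y_c = Σ (1 − W_i)·Y_ic and (W_i)_{i∈S} are independent Bernoulli with P(W_i = 1) = p_i. Then E_δ(τ̂) = (μ_t − μ_c) + (s_t/p_t − s_c/p_c) + (1/(n²·p_t²))·Σ_{i∈S} p_i²·(Y_it − ρ_t) − (1/(n²·p_c²))·Σ_{i∈S} (1 − p_i)²·(Y_ic − ρ_c).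 -/

import Mathlib

open MeasureTheory ProbabilityTheory

/-- Covariance of two real random variables: `E[(X - E X)(Y - E Y)]`. -/
noncomputable def cov {Ω : Type*} [MeasurableSpace Ω] (μ : Measure Ω) (X Y : Ω → ℝ) : ℝ :=
  ∫ ω, (X ω - ∫ ω', X ω' ∂μ) * (Y ω - ∫ ω', Y ω' ∂μ) ∂μ

section Aux

variable {Ω : Type*} [MeasurableSpace Ω] {μ : Measure Ω} [IsProbabilityMeasure μ]

private lemma integrable_of_bound (f : Ω → ℝ) (hf : Measurable f) (C : ℝ)
    (h : ∀ ω, |f ω| ≤ C) : Integrable f μ := by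
  refine Integrable.mono (integrable_const C) hf.aestronglyMeasurable
    (ae_of_all _ fun ω => ?_)
  have := h ω
  simp only [Real.norm_eq_abs]
  exact this.trans (le_abs_self C)

private lemma W_bound {W : Ω → ℝ} (h01 : ∀ ω, W ω = 0 ∨ W ω = 1) (ω : Ω) : |W ω| ≤ 1 := by
  rcases h01 ω with h | h <;> simp [h]

private lemma integrable_W {W : Ω → ℝ} (hm : Measurable W)
    (h01 : ∀ ω, W ω = 0 ∨ W ω = 1) : Integrable W μ :=
  integrable_of_bound W hm 1 (W_bound h01)

private lemma integral_W {W : Ω → ℝ} (hm : Measurable W)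
    (h01 : ∀ ω, W ω = 0 ∨ W ω = 1) {q : ℝ} (hq : 0 ≤ q)
    (hμ : μ {ω | W ω = 1} = ENNReal.ofReal q) :
    ∫ ω, W ω ∂μ = q := by
  have hset : MeasurableSet {ω | W ω = 1} := hm (measurableSet_singleton 1)
  have hW : W = Set.indicator {ω | W ω = 1} (fun _ => (1 : ℝ)) := by
    funext ω
    rcases h01 ω with h | h
    · simp [Set.indicator, Set.mem_setOf_eq, h]
    · simp [Set.indicator, Set.mem_setOf_eq, h]
  rw [hW, integral_indicator hset, setIntegral_const, measureReal_def, hμ, ENNReal.toReal_ofReal hq, smul_eq_mul,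
    mul_one]

/-- Integral of `(f - a) * (g - b)`. -/
private lemma integral_sub_mul_sub {f g : Ω → ℝ} (hf : Integrable f μ) (hg : Integrable g μ)
    (hfg : Integrable (fun ω => f ω * g ω) μ) (a b : ℝ) :
    ∫ ω, (f ω - a) * (g ω - b) ∂μ
      = (∫ ω, f ω * g ω ∂μ) - a * (∫ ω, g ω ∂μ) - b * (∫ ω, f ω ∂μ) + a * b := by
  have heq : (fun ω => (f ω - a) * (g ω - b))
      = fun ω => (f ω * g ω - a * g ω - b * f ω) + a * b := by
    funext ω; ring
  have h2 : Integrable (fun ω => f ω * g ω - a * g ω) μ := hfg.sub (hg.const_mul a)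
  have h1 : Integrable (fun ω => f ω * g ω - a * g ω - b * f ω) μ := h2.sub (hf.const_mul b)
  rw [heq, integral_add h1 (integrable_const _), integral_sub h2 (hf.const_mul b),
    integral_sub hfg (hg.const_mul a), integral_const_mul, integral_const_mul, integral_const]
  simp

/-- Key covariance computation for sums of Bernoulli indicators. -/
private lemma cov_sum_W {ι : Type*} (S : Finset ι) (W : ι → Ω → ℝ)
    (hWmeas : ∀ i, Measurable (W i))
    (hW01 : ∀ i, ∀ ω, W i ω = 0 ∨ W i ω = 1)
    (q : ι → ℝ) (hq : ∀ i ∈ S, 0 ≤ q i)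
    (hWq : ∀ i ∈ S, ∫ ω, W i ω ∂μ = q i)
    (hindep : iIndepFun W μ)
    (a c : ι → ℝ) :
    cov μ (fun ω => ∑ i ∈ S, a i * W i ω) (fun ω => ∑ i ∈ S, c i * W i ω)
      = ∑ i ∈ S, a i * c i * (q i * (1 - q i)) := by
  classical
  have hInt : ∀ i, Integrable (W i) μ := fun i => integrable_W (hWmeas i) (hW01 i)
  have hIntProd : ∀ i j, Integrable (fun ω => W i ω * W j ω) μ := by
    intro i j
    refine integrable_of_bound _ ((hWmeas i).mul (hWmeas j)) 1 fun ω => ?_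
    rw [abs_mul]
    exact mul_le_one₀ (W_bound (hW01 i) ω) (abs_nonneg _) (W_bound (hW01 j) ω)
  -- value of each cross term
  have hkey : ∀ i ∈ S, ∀ j ∈ S,
      ∫ ω, (W i ω - q i) * (W j ω - q j) ∂μ
        = if i = j then q i * (1 - q i) else 0 := by
    intro i hi j hj
    rw [integral_sub_mul_sub (hInt i) (hInt j) (hIntProd i j), hWq i hi, hWq j hj]
    by_cases hij : i = j
    · subst hij
      have hWW : (fun ω => W i ω * W i ω) = W i := by
        funext ω; rcases hW01 i ω with h | h <;> simp [h]
      rw [hWW, hWq i hi, if_pos rfl]; ring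
    · have hind : IndepFun (W i) (W j) μ := hindep.indepFun hij
      have hmul : ∫ ω, W i ω * W j ω ∂μ = (∫ ω, W i ω ∂μ) * ∫ ω, W j ω ∂μ :=
        hind.integral_fun_mul_eq_mul_integral (hInt i).aestronglyMeasurable (hInt j).aestronglyMeasurable
      rw [hmul, hWq i hi, hWq j hj, if_neg hij]
      ring
  -- integrability of each product term
  have hIntTerm : ∀ i j, Integrable (fun ω => (W i ω - q i) * (W j ω - q j)) μ := by
    intro i j
    have heq : (fun ω => (W i ω - q i) * (W j ω - q j))
        = fun ω => (W i ω * W j ω - q i * W j ω - q j * W i ω) + q i * q j := by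
      funext ω; ring
    rw [heq]
    exact ((((hIntProd i j).sub ((hInt j).const_mul _)).sub ((hInt i).const_mul _)).add
      (integrable_const _))
  -- integrals of the sums
  have hIX : ∀ b : ι → ℝ, ∫ ω, (∑ i ∈ S, b i * W i ω) ∂μ = ∑ i ∈ S, b i * q i := by
    intro b
    rw [integral_finset_sum S (fun i _ => (hInt i).const_mul (b i))]
    exact Finset.sum_congr rfl fun i hi => by rw [integral_const_mul, hWq i hi]
  unfold cov
  have hintegrand : (fun ω =>
      ((∑ i ∈ S, a i * W i ω) - ∫ ω', (∑ i ∈ S, a i * W i ω') ∂μ)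
        * ((∑ i ∈ S, c i * W i ω) - ∫ ω', (∑ i ∈ S, c i * W i ω') ∂μ))
      = fun ω => ∑ i ∈ S, ∑ j ∈ S,
          (a i * c j) * ((W i ω - q i) * (W j ω - q j)) := by
    funext ω
    rw [hIX a, hIX c, ← Finset.sum_sub_distrib, ← Finset.sum_sub_distrib, Finset.sum_mul_sum]
    refine Finset.sum_congr rfl fun i _ => Finset.sum_congr rfl fun j _ => by ring
  rw [hintegrand,
    integral_finset_sum S (fun i _ => integrable_finset_sum S
      (fun j _ => (hIntTerm i j).const_mul _))]
  refine Finset.sum_congr rfl fun i hi => ?_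
  rw [integral_finset_sum S (fun j _ => (hIntTerm i j).const_mul _)]
  have : ∀ j ∈ S, ∫ ω, (a i * c j) * ((W i ω - q i) * (W j ω - q j)) ∂μ
      = (a i * c j) * (if i = j then q i * (1 - q i) else 0) := by
    intro j hj
    rw [integral_const_mul, hkey i hi j hj]
  rw [Finset.sum_congr rfl this]
  simp only [mul_ite, mul_zero]
  rw [Finset.sum_ite_eq S i fun j => a i * c j * (q i * (1 - q i)), if_pos hi]

/-- Covariance is unchanged by adding constants. -/
private lemma cov_add_const (f g : Ω → ℝ) (hf : Integrable f μ) (hg : Integrable g μ)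
    (C D : ℝ) :
    cov μ (fun ω => C + f ω) (fun ω => D + g ω) = cov μ f g := by
  unfold cov
  have h1 : ∫ ω, (C + f ω) ∂μ = C + ∫ ω, f ω ∂μ := by
    rw [integral_add (integrable_const C) hf, integral_const]; simp
  have h2 : ∫ ω, (D + g ω) ∂μ = D + ∫ ω, g ω ∂μ := by
    rw [integral_add (integrable_const D) hg, integral_const]; simp
  have : (fun ω => (C + f ω - ∫ ω', (C + f ω') ∂μ) * (D + g ω - ∫ ω', (D + g ω') ∂μ))
      = fun ω => (f ω - ∫ ω', f ω' ∂μ) * (g ω - ∫ ω', g ω' ∂μ) := by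
    funext ω; rw [h1, h2]; ring
  rw [this]

end Aux

/-- Theorem 1 (delta-method mean of the stratum estimator, exact form): with independent
Bernoulli(`p_i`) treatment indicators, the delta-method mean
`(ρ_t − Cov(y_t − ρ_t x_t, x_t)/(n p_t)²) − (ρ_c − Cov(y_c − ρ_c x_c, x_c)/(n p_c)²)`
equals `(μ_t − μ_c) + (s_t/p_t − s_c/p_c)` plus the explicit remainder terms. -/
theorem delta_method_mean_stratum
    {Ω ι : Type*} [MeasurableSpace Ω] (μ : Measure Ω) [IsProbabilityMeasure μ]
    (S : Finset ι) (hS : S.Nonempty)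
    (Yt Yc p : ι → ℝ) (hp : ∀ i ∈ S, p i ∈ Set.Ioo (0 : ℝ) 1)
    (W : ι → Ω → ℝ)
    (hWmeas : ∀ i, Measurable (W i))
    (hW01 : ∀ i, ∀ ω, W i ω = 0 ∨ W i ω = 1)
    (hWp : ∀ i ∈ S, μ {ω | W i ω = 1} = ENNReal.ofReal (p i))
    (hindep : iIndepFun W μ)
    (n μt μc pt pc st sc ρt ρc : ℝ)
    (hn : n = (S.card : ℝ))
    (hμt : μt = (1 / n) * ∑ i ∈ S, Yt i)
    (hμc : μc = (1 / n) * ∑ i ∈ S, Yc i)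
    (hpt : pt = (1 / n) * ∑ i ∈ S, p i)
    (hpc : pc = 1 - pt)
    (hst : st = (1 / n) * (∑ i ∈ S, Yt i * p i) - μt * pt)
    (hsc : sc = (1 / n) * (∑ i ∈ S, Yc i * (1 - p i)) - μc * pc)
    (hρt : ρt = μt + st / pt)
    (hρc : ρc = μc + sc / pc)
    (xt yt xc yc : Ω → ℝ)
    (hxt : xt = fun ω => ∑ i ∈ S, W i ω)
    (hyt : yt = fun ω => ∑ i ∈ S, W i ω * Yt i)
    (hxc : xc = fun ω => ∑ i ∈ S, (1 - W i ω))
    (hyc : yc = fun ω => ∑ i ∈ S, (1 - W i ω) * Yc i) :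
    (ρt - cov μ (fun ω => yt ω - ρt * xt ω) xt / (n * pt) ^ 2)
      - (ρc - cov μ (fun ω => yc ω - ρc * xc ω) xc / (n * pc) ^ 2)
      = (μt - μc) + (st / pt - sc / pc)
        + (1 / (n ^ 2 * pt ^ 2)) * ∑ i ∈ S, (p i) ^ 2 * (Yt i - ρt)
        - (1 / (n ^ 2 * pc ^ 2)) * ∑ i ∈ S, (1 - p i) ^ 2 * (Yc i - ρc) := by
  have hInt : ∀ i, Integrable (W i) μ := fun i => integrable_W (hWmeas i) (hW01 i)
  -- basic positivity facts
  have hn0 : (0 : ℝ) < n := by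
    rw [hn]; exact_mod_cast Finset.card_pos.mpr hS
  have hnne : n ≠ 0 := ne_of_gt hn0
  have hptpos : 0 < pt := by
    rw [hpt]
    apply mul_pos (by positivity)
    exact Finset.sum_pos (fun i hi => (hp i hi).1) hS
  have hpt1 : pt < 1 := by
    rw [hpt]
    have hsum : ∑ i ∈ S, p i < ∑ i ∈ S, (1 : ℝ) :=
      Finset.sum_lt_sum_of_nonempty hS fun i hi => (hp i hi).2
    have : ∑ i ∈ S, (1 : ℝ) = n := by rw [hn]; simp
    calc (1 / n) * ∑ i ∈ S, p i < (1 / n) * n := by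
          rw [← this]; exact mul_lt_mul_of_pos_left hsum (by positivity)
      _ = 1 := by field_simp
  have hpcpos : 0 < pc := by rw [hpc]; linarith
  have hptne : pt ≠ 0 := ne_of_gt hptpos
  have hpcne : pc ≠ 0 := ne_of_gt hpcpos
  -- expectation of W i
  have hEW : ∀ i ∈ S, ∫ ω, W i ω ∂μ = p i := fun i hi =>
    integral_W (hWmeas i) (hW01 i) (le_of_lt (hp i hi).1) (hWp i hi)
  -- known sums
  have hsum_p : ∑ i ∈ S, p i = n * pt := by rw [hpt]; field_simp
  have hsum_one : ∑ i ∈ S, (1 : ℝ) = n := by rw [hn]; simp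
  have hsum_Ytp : ∑ i ∈ S, Yt i * p i = n * st + n * (μt * pt) := by
    have := hst; field_simp at this; linarith
  have hsum_Ycp : ∑ i ∈ S, Yc i * (1 - p i) = n * sc + n * (μc * pc) := by
    have := hsc; field_simp at this; linarith
  -- zero-sum identities
  have Zt : ∑ i ∈ S, (Yt i - ρt) * p i = 0 := by
    have hexp : ∑ i ∈ S, (Yt i - ρt) * p i
        = (∑ i ∈ S, Yt i * p i) - ρt * ∑ i ∈ S, p i := by
      rw [Finset.mul_sum, ← Finset.sum_sub_distrib]
      exact Finset.sum_congr rfl fun i _ => by ring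
    rw [hexp, hsum_Ytp, hsum_p, hρt]
    field_simp
    ring
  have Zc : ∑ i ∈ S, (Yc i - ρc) * (1 - p i) = 0 := by
    have hsum_1mp : ∑ i ∈ S, (1 - p i) = n * pc := by
      rw [Finset.sum_sub_distrib, hsum_one, hsum_p, hpc]; ring
    have hexp : ∑ i ∈ S, (Yc i - ρc) * (1 - p i)
        = (∑ i ∈ S, Yc i * (1 - p i)) - ρc * ∑ i ∈ S, (1 - p i) := by
      rw [Finset.mul_sum, ← Finset.sum_sub_distrib]
      exact Finset.sum_congr rfl fun i _ => by ring
    rw [hexp, hsum_Ycp, hsum_1mp, hρc]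
    field_simp
    ring
  -- treatment covariance
  have hcovt : cov μ (fun ω => yt ω - ρt * xt ω) xt
      = ∑ i ∈ S, (Yt i - ρt) * (p i * (1 - p i)) := by
    have h1 : (fun ω => yt ω - ρt * xt ω) = fun ω => ∑ i ∈ S, (Yt i - ρt) * W i ω := by
      funext ω
      rw [hyt, hxt]
      simp only [Finset.mul_sum, ← Finset.sum_sub_distrib]
      exact Finset.sum_congr rfl fun i _ => by ring
    have h2 : xt = fun ω => ∑ i ∈ S, (1 : ℝ) * W i ω := by
      funext ω; rw [hxt]; simp
    rw [h1]
    conv_lhs => rw [h2]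
    rw [cov_sum_W S W hWmeas hW01 p (fun i hi => le_of_lt (hp i hi).1) hEW hindep]
    exact Finset.sum_congr rfl fun i _ => by ring
  -- control covariance
  have hcovc : cov μ (fun ω => yc ω - ρc * xc ω) xc
      = ∑ i ∈ S, (Yc i - ρc) * (p i * (1 - p i)) := by
    have h1 : (fun ω => yc ω - ρc * xc ω)
        = fun ω => (∑ i ∈ S, (Yc i - ρc)) + ∑ i ∈ S, (-(Yc i - ρc)) * W i ω := by
      funext ω
      rw [hyc, hxc]
      simp only [Finset.mul_sum, ← Finset.sum_sub_distrib, ← Finset.sum_add_distrib]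
      exact Finset.sum_congr rfl fun i _ => by ring
    have h2 : xc = fun ω => ((S.card : ℝ)) + ∑ i ∈ S, (-1 : ℝ) * W i ω := by
      funext ω
      simp only [hxc, Finset.sum_sub_distrib, Finset.sum_const, nsmul_eq_mul, mul_one,
        neg_one_mul, Finset.sum_neg_distrib]
      ring
    rw [h1]
    conv_lhs => rw [h2]
    rw [cov_add_const _ _ (integrable_finset_sum S fun i _ => (hInt i).const_mul _)
      (integrable_finset_sum S fun i _ => (hInt i).const_mul _),
      cov_sum_W S W hWmeas hW01 p (fun i hi => le_of_lt (hp i hi).1) hEW hindep]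
    exact Finset.sum_congr rfl fun i _ => by ring
  -- rewrite covariances via the zero-sum identities
  have hCt : ∑ i ∈ S, (Yt i - ρt) * (p i * (1 - p i))
      = - ∑ i ∈ S, (p i) ^ 2 * (Yt i - ρt) := by
    have : ∑ i ∈ S, (Yt i - ρt) * (p i * (1 - p i))
        = ∑ i ∈ S, ((Yt i - ρt) * p i - (p i) ^ 2 * (Yt i - ρt)) :=
      Finset.sum_congr rfl fun i _ => by ring
    rw [this, Finset.sum_sub_distrib, Zt]; ring
  have hCc : ∑ i ∈ S, (Yc i - ρc) * (p i * (1 - p i))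
      = - ∑ i ∈ S, (1 - p i) ^ 2 * (Yc i - ρc) := by
    have : ∑ i ∈ S, (Yc i - ρc) * (p i * (1 - p i))
        = ∑ i ∈ S, ((Yc i - ρc) * (1 - p i) - (1 - p i) ^ 2 * (Yc i - ρc)) :=
      Finset.sum_congr rfl fun i _ => by ring
    rw [this, Finset.sum_sub_distrib, Zc]; ring
  rw [hcovt, hcovc, hCt, hCc, hρt, hρc]
  field_simp
  ring
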